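/- Let {σ_j}_{j ∈ J} be a countable family of nonnegative reals and {a_k}_{k ≥ 1} a non-increasing nonnegative sequence. Suppose there exist constants B ≥ 1, c > 0 such that for all t > 0, #{j : σ_j > t} ≤ 4B·#{k : a_k > c t} + 6B. Then for every q > 0 with {a_k} ∈ l^q and {σ_j} bounded with sup_j σ_j ≤ a_1, one has ‖{σ_j}‖_{l^q}^q ≤ c₁ ‖{a_k}‖_{l^q}^q + c₂ (sup_j σ_j)^q ≤ C ‖{a_k}‖_{l^q}^q for constants c₁, c₂, C depending only on B, c, q. -/

import Mathlib

open Set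

open ENNReal

private lemma tail_geom {r : ℝ≥0∞} (hr : r < 1) (m : ℕ) :
    ∑' n : ℕ, (if m ≤ n then r ^ n else 0) = r ^ m * (1 - r)⁻¹ := by
  have hrt : r ≠ ⊤ := (hr.trans (by norm_num)).ne
  have h1 : (1 - r) ≠ 0 := by simpa [tsub_eq_zero_iff_le] using hr.not_ge
  have h2 : (1 - r) ≠ ⊤ := ne_top_of_le_ne_top one_ne_top tsub_le_self
  have hK : (1 : ℝ≥0∞) + r * (1 - r)⁻¹ = (1 - r)⁻¹ := by
    calc (1 : ℝ≥0∞) + r * (1 - r)⁻¹ = (1 - r) * (1 - r)⁻¹ + r * (1 - r)⁻¹ := by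
          rw [ENNReal.mul_inv_cancel h1 h2]
      _ = ((1 - r) + r) * (1 - r)⁻¹ := by ring
      _ = (1 - r)⁻¹ := by rw [tsub_add_cancel_of_le hr.le, one_mul]
  induction m with
  | zero => simpa using ENNReal.tsum_geometric r
  | succ m ih =>
    have hsplit : ∀ n : ℕ, (if m ≤ n then r ^ n else 0)
        = (if n = m then r ^ n else 0) + (if m + 1 ≤ n then r ^ n else 0) := by
      intro n
      rcases lt_trichotomy n m with h | h | h
      · rw [if_neg (by omega), if_neg (by omega), if_neg (by omega), add_zero]
      · subst h; rw [if_pos le_rfl, if_pos rfl, if_neg (by omega), add_zero]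
      · rw [if_pos (by omega), if_neg (by omega), if_pos (by omega), zero_add]
    have h1' : r ^ m * (1 - r)⁻¹
        = r ^ m + ∑' n : ℕ, (if m + 1 ≤ n then r ^ n else 0) := by
      rw [← ih, tsum_congr hsplit, ENNReal.tsum_add,
        tsum_eq_single m (by intro n hn; rw [if_neg hn]), if_pos rfl]
    have h2' : r ^ m * (1 - r)⁻¹ = r ^ m + r ^ (m + 1) * (1 - r)⁻¹ := by
      calc r ^ m * (1 - r)⁻¹ = r ^ m * (1 + r * (1 - r)⁻¹) := by rw [hK]
        _ = r ^ m + r ^ (m + 1) * (1 - r)⁻¹ := by ring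
    exact ((ENNReal.add_right_inj (pow_ne_top hrt)).mp (h1'.symm.trans h2'))

private lemma pow_rpow_swap (q : ℝ) (n : ℕ) : ((2⁻¹:ℝ) ^ n) ^ q = ((2⁻¹:ℝ) ^ q) ^ n := by
  rw [← Real.rpow_natCast (2⁻¹:ℝ) n, ← Real.rpow_natCast ((2⁻¹:ℝ) ^ q) n,
    ← Real.rpow_mul (by norm_num : (0:ℝ) ≤ 2⁻¹), ← Real.rpow_mul (by norm_num : (0:ℝ) ≤ 2⁻¹),
    mul_comm]

private lemma main_bound {J : Type} [Countable J] (σ : J → ℝ) (a : ℕ → ℝ) (B : ℕ)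
    (c q lam : ℝ) (hc : 0 < c) (hq : 0 < q) (hlam : 0 < lam)
    (hσ0 : ∀ j, 0 ≤ σ j) (ha0 : ∀ k, 0 ≤ a k)
    (hsuma : Summable fun k => a k ^ q)
    (hσle : ∀ j, σ j ≤ lam)
    (hcount : ∀ t : ℝ, 0 < t →
      {j | σ j > t}.encard ≤ 4 * (B : ℕ∞) * {k | a k > c * t}.encard + 6 * (B : ℕ∞)) :
    ∑' j, ENNReal.ofReal (σ j ^ q) ≤
      ENNReal.ofReal ((2 / c) ^ q * (4 * B) * (1 - (2⁻¹:ℝ) ^ q)⁻¹ * (∑' k, a k ^ q)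
        + 6 * B * (1 - (2⁻¹:ℝ) ^ q)⁻¹ * lam ^ q) := by
  classical
  have haq0 : ∀ k, 0 ≤ a k ^ q := fun k => Real.rpow_nonneg (ha0 k) q
  set Ar := ∑' k, a k ^ q with hArdef
  have hAr0 : 0 ≤ Ar := tsum_nonneg haq0
  set r₀ : ℝ := (2⁻¹:ℝ) ^ q with hr₀def
  have hr₀ : 0 < r₀ := Real.rpow_pos_of_pos (by norm_num) q
  have hr₀1 : r₀ < 1 := Real.rpow_lt_one (by norm_num) (by norm_num) hq
  set r : ℝ≥0∞ := ENNReal.ofReal r₀ with hrdef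
  have hr1 : r < 1 := by rw [hrdef]; exact ENNReal.ofReal_lt_one.mpr hr₀1
  set Kr : ℝ := (1 - r₀)⁻¹ with hKrdef
  have hKr : 0 < Kr := inv_pos.mpr (by linarith)
  have hKeq : ENNReal.ofReal Kr = (1 - r)⁻¹ := by
    rw [hKrdef, ENNReal.ofReal_inv_of_pos (by linarith), ENNReal.ofReal_sub 1 hr₀.le,
      ENNReal.ofReal_one]
  have ht : ∀ n : ℕ, (0:ℝ) < lam * (2⁻¹:ℝ) ^ n := fun n => by positivity
  have hrpow : ∀ n : ℕ, ENNReal.ofReal ((lam * (2⁻¹:ℝ) ^ n) ^ q)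
      = ENNReal.ofReal (lam ^ q) * r ^ n := by
    intro n
    rw [Real.mul_rpow hlam.le (by positivity), pow_rpow_swap q n, ← hr₀def,
      ENNReal.ofReal_mul (Real.rpow_nonneg hlam.le q), ENNReal.ofReal_pow hr₀.le]
  -- pointwise bound
  have hpt : ∀ j, ENNReal.ofReal (σ j ^ q)
      ≤ ∑' n : ℕ, (if lam * (2⁻¹:ℝ) ^ (n+1) < σ j
          then ENNReal.ofReal (lam ^ q) * r ^ n else 0) := by
    intro j
    rcases eq_or_lt_of_le (hσ0 j) with h0 | h0
    · rw [← h0, Real.zero_rpow hq.ne', ENNReal.ofReal_zero]; exact zero_le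
    · have hex : ∃ n : ℕ, lam * (2⁻¹:ℝ) ^ (n+1) < σ j := by
        obtain ⟨m, hm⟩ := exists_pow_lt_of_lt_one (div_pos h0 hlam)
          (by norm_num : (2⁻¹:ℝ) < 1)
        refine ⟨m, ?_⟩
        have h1 : (2⁻¹:ℝ) ^ (m+1) ≤ (2⁻¹:ℝ) ^ m :=
          pow_le_pow_of_le_one (by norm_num) (by norm_num) (by omega)
        have h2 := (lt_div_iff₀ hlam).mp hm
        nlinarith
      set n₀ := Nat.find hex with hn₀def
      have hlow : lam * (2⁻¹:ℝ) ^ (n₀+1) < σ j := Nat.find_spec hex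
      have hupp : σ j ≤ lam * (2⁻¹:ℝ) ^ n₀ := by
        rcases Nat.eq_zero_or_pos n₀ with h | h
        · rw [h]; simpa using hσle j
        · have hmin := Nat.find_min hex (show n₀ - 1 < n₀ by omega)
          have hn : n₀ - 1 + 1 = n₀ := by omega
          rw [hn] at hmin
          exact not_lt.mp hmin
      calc ENNReal.ofReal (σ j ^ q) ≤ ENNReal.ofReal ((lam * (2⁻¹:ℝ) ^ n₀) ^ q) :=
            ENNReal.ofReal_le_ofReal (Real.rpow_le_rpow (hσ0 j) hupp hq.le)
        _ = ENNReal.ofReal (lam ^ q) * r ^ n₀ := hrpow n₀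
        _ = (if lam * (2⁻¹:ℝ) ^ (n₀+1) < σ j
              then ENNReal.ofReal (lam ^ q) * r ^ n₀ else 0) := (if_pos hlow).symm
        _ ≤ _ := ENNReal.le_tsum n₀
  -- per-n count bound, cast to ℝ≥0∞
  have hcount' : ∀ n : ℕ,
      (({j | σ j > lam * (2⁻¹:ℝ) ^ (n+1)}.encard : ℕ∞) : ℝ≥0∞)
        ≤ 4 * (B:ℝ≥0∞) * (({k | a k > c * (lam * (2⁻¹:ℝ) ^ (n+1))}.encard : ℕ∞) : ℝ≥0∞)
          + 6 * (B:ℝ≥0∞) := by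
    intro n
    have h := ENat.toENNReal_le.mpr (hcount _ (ht (n+1)))
    simpa [ENat.toENNReal_add, ENat.toENNReal_mul] using h
  -- sum over j at fixed n
  have hsum_j : ∀ n : ℕ,
      ∑' j, (if lam * (2⁻¹:ℝ) ^ (n+1) < σ j then ENNReal.ofReal (lam ^ q) * r ^ n else 0)
        = (({j | σ j > lam * (2⁻¹:ℝ) ^ (n+1)}.encard : ℕ∞) : ℝ≥0∞)
            * (ENNReal.ofReal (lam ^ q) * r ^ n) := by
    intro n
    have hind : ∀ j, (if lam * (2⁻¹:ℝ) ^ (n+1) < σ j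
          then ENNReal.ofReal (lam ^ q) * r ^ n else 0)
        = Set.indicator {j' | σ j' > lam * (2⁻¹:ℝ) ^ (n+1)}
            (fun _ => ENNReal.ofReal (lam ^ q) * r ^ n) j := fun j => by
      rw [Set.indicator_apply]
      exact if_congr Iff.rfl rfl rfl
    rw [tsum_congr hind, ← tsum_subtype, ENNReal.tsum_set_const]
  -- encard of a-side as a tsum
  have hM : ∀ s : ℝ, (({k | a k > s}.encard : ℕ∞) : ℝ≥0∞)
      = ∑' k : ℕ, (if s < a k then (1:ℝ≥0∞) else 0) := by
    intro s
    have hind : ∀ k : ℕ, (if s < a k then (1:ℝ≥0∞) else 0)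
        = Set.indicator {k' | a k' > s} (fun _ => (1:ℝ≥0∞)) k := fun k => by
      rw [Set.indicator_apply]
      exact if_congr Iff.rfl rfl rfl
    rw [tsum_congr hind, ← tsum_subtype, ENNReal.tsum_set_one]
  -- bound for the inner geometric sum at fixed k
  have hclam : (0:ℝ) < c * lam := mul_pos hc hlam
  have hU : ∀ k : ℕ, ∑' n : ℕ, (if c * (lam * (2⁻¹:ℝ) ^ (n+1)) < a k then r ^ n else 0)
      ≤ ENNReal.ofReal ((2 / (c * lam)) ^ q * a k ^ q) * (1 - r)⁻¹ := by
    intro k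
    by_cases hex : ∃ n : ℕ, c * (lam * (2⁻¹:ℝ) ^ (n+1)) < a k
    · set n₁ := Nat.find hex with hn₁def
      have hspec : c * (lam * (2⁻¹:ℝ) ^ (n₁+1)) < a k := Nat.find_spec hex
      have hset : ∀ n : ℕ, (if c * (lam * (2⁻¹:ℝ) ^ (n+1)) < a k then r ^ n else 0)
          = (if n₁ ≤ n then r ^ n else 0) := by
        intro n
        by_cases hn : n₁ ≤ n
        · have hpow : (2⁻¹:ℝ) ^ (n+1) ≤ (2⁻¹:ℝ) ^ (n₁+1) :=
            pow_le_pow_of_le_one (by norm_num) (by norm_num) (by omega)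
          have hle : c * (lam * (2⁻¹:ℝ) ^ (n+1)) ≤ c * (lam * (2⁻¹:ℝ) ^ (n₁+1)) := by
            nlinarith
          rw [if_pos (lt_of_le_of_lt hle hspec), if_pos hn]
        · rw [if_neg (Nat.find_min hex (not_le.mp hn)), if_neg hn]
      rw [tsum_congr hset, tail_geom hr1]
      have hspec' := hspec
      rw [pow_succ] at hspec'
      have h2 : (2⁻¹:ℝ) ^ n₁ * (c * lam) < 2 * a k := by nlinarith
      have hineq : (2⁻¹:ℝ) ^ n₁ ≤ 2 / (c * lam) * a k := by
        rw [div_mul_eq_mul_div, le_div_iff₀ hclam]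
        linarith
      have hterm : r ^ n₁ ≤ ENNReal.ofReal ((2 / (c * lam)) ^ q * a k ^ q) := by
        rw [hrdef, ← ENNReal.ofReal_pow hr₀.le]
        apply ENNReal.ofReal_le_ofReal
        rw [hr₀def, ← pow_rpow_swap q n₁,
          ← Real.mul_rpow (by positivity) (ha0 k)]
        exact Real.rpow_le_rpow (by positivity) hineq hq.le
      exact mul_le_mul_left hterm _
    · push_neg at hex
      have hz : ∀ n : ℕ, (if c * (lam * (2⁻¹:ℝ) ^ (n+1)) < a k then r ^ n else 0) = 0 :=
        fun n => if_neg (not_lt.mpr (hex n))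
      rw [tsum_congr hz, tsum_zero]
      exact zero_le
  -- the double-sum (T) bound
  have hT : ∑' n : ℕ,
        r ^ n * (({k | a k > c * (lam * (2⁻¹:ℝ) ^ (n+1))}.encard : ℕ∞) : ℝ≥0∞)
      ≤ ENNReal.ofReal ((2 / (c * lam)) ^ q) * ENNReal.ofReal Ar * (1 - r)⁻¹ := by
    have h1 : ∀ n : ℕ,
        r ^ n * (({k | a k > c * (lam * (2⁻¹:ℝ) ^ (n+1))}.encard : ℕ∞) : ℝ≥0∞)
          = ∑' k : ℕ, (if c * (lam * (2⁻¹:ℝ) ^ (n+1)) < a k then r ^ n else 0) := by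
      intro n
      rw [hM, ← ENNReal.tsum_mul_left]
      exact tsum_congr fun k => by rw [mul_ite, mul_one, mul_zero]
    rw [tsum_congr h1, ENNReal.tsum_comm]
    calc ∑' k : ℕ, ∑' n : ℕ, (if c * (lam * (2⁻¹:ℝ) ^ (n+1)) < a k then r ^ n else 0)
        ≤ ∑' k : ℕ, ENNReal.ofReal ((2 / (c * lam)) ^ q * a k ^ q) * (1 - r)⁻¹ :=
          ENNReal.tsum_le_tsum hU
      _ = ENNReal.ofReal ((2 / (c * lam)) ^ q) * ENNReal.ofReal Ar * (1 - r)⁻¹ := by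
          have : ∀ k : ℕ, ENNReal.ofReal ((2 / (c * lam)) ^ q * a k ^ q) * (1 - r)⁻¹
              = (ENNReal.ofReal ((2 / (c * lam)) ^ q) * (1 - r)⁻¹)
                  * ENNReal.ofReal (a k ^ q) := fun k => by
            rw [ENNReal.ofReal_mul (by positivity)]; ring
          rw [tsum_congr this, ENNReal.tsum_mul_left,
            ← ENNReal.ofReal_tsum_of_nonneg haq0 hsuma, ← hArdef]
          ring
  -- main chain
  calc ∑' j, ENNReal.ofReal (σ j ^ q)
      ≤ ∑' j, ∑' n : ℕ, (if lam * (2⁻¹:ℝ) ^ (n+1) < σ j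
          then ENNReal.ofReal (lam ^ q) * r ^ n else 0) := ENNReal.tsum_le_tsum hpt
    _ = ∑' n : ℕ, ∑' j, (if lam * (2⁻¹:ℝ) ^ (n+1) < σ j
          then ENNReal.ofReal (lam ^ q) * r ^ n else 0) := ENNReal.tsum_comm
    _ = ∑' n : ℕ, (({j | σ j > lam * (2⁻¹:ℝ) ^ (n+1)}.encard : ℕ∞) : ℝ≥0∞)
          * (ENNReal.ofReal (lam ^ q) * r ^ n) := tsum_congr hsum_j
    _ ≤ ∑' n : ℕ, (4 * (B:ℝ≥0∞)
            * (({k | a k > c * (lam * (2⁻¹:ℝ) ^ (n+1))}.encard : ℕ∞) : ℝ≥0∞)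
          + 6 * (B:ℝ≥0∞)) * (ENNReal.ofReal (lam ^ q) * r ^ n) :=
        ENNReal.tsum_le_tsum fun n => mul_le_mul_left (hcount' n) _
    _ = (4 * (B:ℝ≥0∞) * ENNReal.ofReal (lam ^ q))
          * (∑' n : ℕ, r ^ n
              * (({k | a k > c * (lam * (2⁻¹:ℝ) ^ (n+1))}.encard : ℕ∞) : ℝ≥0∞))
        + (6 * (B:ℝ≥0∞) * ENNReal.ofReal (lam ^ q)) * (1 - r)⁻¹ := by
        have hdist : ∀ n : ℕ, (4 * (B:ℝ≥0∞)
            * (({k | a k > c * (lam * (2⁻¹:ℝ) ^ (n+1))}.encard : ℕ∞) : ℝ≥0∞)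
            + 6 * (B:ℝ≥0∞)) * (ENNReal.ofReal (lam ^ q) * r ^ n)
          = (4 * (B:ℝ≥0∞) * ENNReal.ofReal (lam ^ q))
              * (r ^ n * (({k | a k > c * (lam * (2⁻¹:ℝ) ^ (n+1))}.encard : ℕ∞) : ℝ≥0∞))
            + (6 * (B:ℝ≥0∞) * ENNReal.ofReal (lam ^ q)) * r ^ n := fun n => by ring
        rw [tsum_congr hdist, ENNReal.tsum_add, ENNReal.tsum_mul_left,
          ENNReal.tsum_mul_left, ENNReal.tsum_geometric]
    _ ≤ (4 * (B:ℝ≥0∞) * ENNReal.ofReal (lam ^ q))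
          * (ENNReal.ofReal ((2 / (c * lam)) ^ q) * ENNReal.ofReal Ar * (1 - r)⁻¹)
        + (6 * (B:ℝ≥0∞) * ENNReal.ofReal (lam ^ q)) * (1 - r)⁻¹ := by
        gcongr
    _ ≤ ENNReal.ofReal ((2 / c) ^ q * (4 * B) * (1 - (2⁻¹:ℝ) ^ q)⁻¹ * Ar
          + 6 * B * (1 - (2⁻¹:ℝ) ^ q)⁻¹ * lam ^ q) := by
        have hcomb : ENNReal.ofReal (lam ^ q) * ENNReal.ofReal ((2 / (c * lam)) ^ q)
            = ENNReal.ofReal ((2 / c) ^ q) := by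
          rw [← ENNReal.ofReal_mul (Real.rpow_nonneg hlam.le q),
            ← Real.mul_rpow hlam.le (by positivity),
            show lam * (2 / (c * lam)) = 2 / c from by
              field_simp]
        have hBe4 : ENNReal.ofReal (4 * (B:ℝ)) = 4 * (B:ℝ≥0∞) := by
          rw [ENNReal.ofReal_mul (by norm_num)]; simp
        have hBe6 : ENNReal.ofReal (6 * (B:ℝ)) = 6 * (B:ℝ≥0∞) := by
          rw [ENNReal.ofReal_mul (by norm_num)]; simp
        have h1 : ENNReal.ofReal ((2 / c) ^ q * (4 * (B:ℝ)) * Kr * Ar)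
            = (4 * (B:ℝ≥0∞) * ENNReal.ofReal (lam ^ q))
              * (ENNReal.ofReal ((2 / (c * lam)) ^ q) * ENNReal.ofReal Ar
                  * ENNReal.ofReal Kr) := by
          rw [ENNReal.ofReal_mul (by positivity), ENNReal.ofReal_mul (by positivity),
            ENNReal.ofReal_mul (by positivity), ← hcomb, hBe4]
          ring
        have h2 : ENNReal.ofReal (6 * (B:ℝ) * Kr * lam ^ q)
            = (6 * (B:ℝ≥0∞) * ENNReal.ofReal (lam ^ q)) * ENNReal.ofReal Kr := by
          rw [ENNReal.ofReal_mul (by positivity), ENNReal.ofReal_mul (by positivity),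
            hBe6]
          ring
        rw [← hKeq,
          ENNReal.ofReal_add (by positivity) (by positivity), h1, h2]

/-- (Abstract distribution-function argument of Lemmas 6.9–6.10 and
Theorem 6.11.) Suppose `#{j : σ_j > t} ≤ 4B·#{k : a_k > c t} + 6B` for all `t > 0`, the
nonnegative sequence `a` is non-increasing and `q`-summable, and `σ_j ≤ a_1` for all `j`.
Then `‖σ‖_q^q ≤ c₁ ‖a‖_q^q + c₂ (sup_j σ_j)^q ≤ C ‖a‖_q^q`, with constants depending only
on `B, c, q`. -/
theorem stmt_18 (B : ℕ) (hB : 1 ≤ B) (c : ℝ) (hc : 0 < c) (q : ℝ) (hq : 0 < q) :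
    ∃ c₁ c₂ C : ℝ, 0 < c₁ ∧ 0 < c₂ ∧ 0 < C ∧
      ∀ {J : Type} [Countable J] (σ : J → ℝ) (a : ℕ → ℝ),
        (∀ j, 0 ≤ σ j) → (∀ k, 0 ≤ a k) → Antitone a →
        Summable (fun k => a k ^ q) →
        (∀ j, σ j ≤ a 0) →
        (∀ t : ℝ, 0 < t →
          {j | σ j > t}.encard ≤ 4 * (B : ℕ∞) * {k | a k > c * t}.encard + 6 * (B : ℕ∞)) →
        Summable (fun j => σ j ^ q) ∧
        (∑' j, σ j ^ q) ≤ c₁ * (∑' k, a k ^ q) + c₂ * (⨆ j, σ j) ^ q ∧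
        (∑' j, σ j ^ q) ≤ C * ∑' k, a k ^ q := by
  have h2c : (0:ℝ) < (2 / c) ^ q := Real.rpow_pos_of_pos (by positivity) q
  have hr₀ : (0:ℝ) < (2⁻¹:ℝ) ^ q := Real.rpow_pos_of_pos (by norm_num) q
  have hr₀1 : (2⁻¹:ℝ) ^ q < 1 := Real.rpow_lt_one (by norm_num) (by norm_num) hq
  have hKr : (0:ℝ) < (1 - (2⁻¹:ℝ) ^ q)⁻¹ := inv_pos.mpr (by linarith)
  have hBpos : (0:ℝ) < B := by exact_mod_cast Nat.lt_of_lt_of_le Nat.zero_lt_one hB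
  have hc₁ : (0:ℝ) < (2 / c) ^ q * (4 * B) * (1 - (2⁻¹:ℝ) ^ q)⁻¹ :=
    mul_pos (mul_pos h2c (by linarith)) hKr
  have hc₂ : (0:ℝ) < 6 * (B:ℝ) * (1 - (2⁻¹:ℝ) ^ q)⁻¹ := mul_pos (by linarith) hKr
  refine ⟨(2 / c) ^ q * (4 * B) * (1 - (2⁻¹:ℝ) ^ q)⁻¹, 6 * (B:ℝ) * (1 - (2⁻¹:ℝ) ^ q)⁻¹,
    (2 / c) ^ q * (4 * B) * (1 - (2⁻¹:ℝ) ^ q)⁻¹ + 6 * (B:ℝ) * (1 - (2⁻¹:ℝ) ^ q)⁻¹,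
    hc₁, hc₂, by linarith, ?_⟩
  intro J _ σ a hσ0 ha0 hmono hsuma hbd hcount
  have haq0 : ∀ k, 0 ≤ a k ^ q := fun k => Real.rpow_nonneg (ha0 k) q
  have hAr0 : 0 ≤ ∑' k, a k ^ q := tsum_nonneg haq0
  have hbdd : BddAbove (Set.range σ) := ⟨a 0, by rintro x ⟨j, rfl⟩; exact hbd j⟩
  have hσle : ∀ j, σ j ≤ ⨆ j', σ j' := fun j => le_ciSup hbdd j
  have hlam0 : 0 ≤ ⨆ j, σ j := by
    rcases isEmpty_or_nonempty J with hJ | hJ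
    · rw [Real.iSup_of_isEmpty]
    · exact le_trans (hσ0 (Classical.arbitrary J)) (hσle _)
  have hlamle : (⨆ j, σ j) ≤ a 0 := by
    rcases isEmpty_or_nonempty J with hJ | hJ
    · rw [Real.iSup_of_isEmpty]; exact ha0 0
    · exact ciSup_le hbd
  have hlamq : (⨆ j, σ j) ^ q ≤ ∑' k, a k ^ q :=
    le_trans (Real.rpow_le_rpow hlam0 hlamle hq.le) (Summable.le_tsum hsuma 0 fun k _ => haq0 k)
  have key : ∑' j, ENNReal.ofReal (σ j ^ q)
      ≤ ENNReal.ofReal ((2 / c) ^ q * (4 * B) * (1 - (2⁻¹:ℝ) ^ q)⁻¹ * (∑' k, a k ^ q)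
          + 6 * B * (1 - (2⁻¹:ℝ) ^ q)⁻¹ * (⨆ j, σ j) ^ q) := by
    rcases eq_or_lt_of_le hlam0 with hlam | hlam
    · have hz : ∀ j, ENNReal.ofReal (σ j ^ q) = 0 := fun j => by
        rw [le_antisymm ((hσle j).trans hlam.ge) (hσ0 j), Real.zero_rpow hq.ne',
          ENNReal.ofReal_zero]
      rw [tsum_congr hz, tsum_zero]
      exact zero_le
    · exact main_bound σ a B c q _ hc hq hlam hσ0 ha0 hsuma hσle hcount
  have hRHS0 : 0 ≤ (2 / c) ^ q * (4 * B) * (1 - (2⁻¹:ℝ) ^ q)⁻¹ * (∑' k, a k ^ q)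
      + 6 * B * (1 - (2⁻¹:ℝ) ^ q)⁻¹ * (⨆ j, σ j) ^ q := by
    have h1 : 0 ≤ (⨆ j, σ j) ^ q := Real.rpow_nonneg hlam0 q
    have h2 := mul_nonneg hc₁.le hAr0
    have h3 := mul_nonneg hc₂.le h1
    linarith
  have hfin : ∑' j, ENNReal.ofReal (σ j ^ q) ≠ ⊤ :=
    ne_top_of_le_ne_top ENNReal.ofReal_ne_top key
  have hsummσ : Summable fun j => σ j ^ q := by
    have h := ENNReal.summable_toReal hfin
    exact h.congr fun j => ENNReal.toReal_ofReal (Real.rpow_nonneg (hσ0 j) q)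
  have htsum : ∑' j, σ j ^ q
      ≤ (2 / c) ^ q * (4 * B) * (1 - (2⁻¹:ℝ) ^ q)⁻¹ * (∑' k, a k ^ q)
        + 6 * B * (1 - (2⁻¹:ℝ) ^ q)⁻¹ * (⨆ j, σ j) ^ q := by
    rw [← ENNReal.ofReal_le_ofReal_iff hRHS0,
      ENNReal.ofReal_tsum_of_nonneg (fun j => Real.rpow_nonneg (hσ0 j) q) hsummσ]
    exact key
  refine ⟨hsummσ, htsum, ?_⟩
  have h4 : 6 * (B:ℝ) * (1 - (2⁻¹:ℝ) ^ q)⁻¹ * (⨆ j, σ j) ^ q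
      ≤ 6 * (B:ℝ) * (1 - (2⁻¹:ℝ) ^ q)⁻¹ * (∑' k, a k ^ q) :=
    mul_le_mul_of_nonneg_left hlamq hc₂.le
  calc ∑' j, σ j ^ q
      ≤ (2 / c) ^ q * (4 * B) * (1 - (2⁻¹:ℝ) ^ q)⁻¹ * (∑' k, a k ^ q)
        + 6 * B * (1 - (2⁻¹:ℝ) ^ q)⁻¹ * (⨆ j, σ j) ^ q := htsum
    _ ≤ ((2 / c) ^ q * (4 * B) * (1 - (2⁻¹:ℝ) ^ q)⁻¹
          + 6 * (B:ℝ) * (1 - (2⁻¹:ℝ) ^ q)⁻¹) * ∑' k, a k ^ q := by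
        rw [add_mul]
        exact add_le_add le_rfl h4
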